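/- Let Γ = diag(σ_1², …, σ_n²) with σ_1 ≥ ⋯ ≥ σ_n ≥ 0 and let X_s ∈ St(n,p) be a stationary point of f_det with X_sᵀΓX_s invertible. If the multiset of eigenvalues of X_sᵀΓX_s is not {σ_1²,…,σ_p²}, then there exists Δ ∈ ℝ^{n×p} with ∇²f_det(X_s)[Δ,Δ] > 0; i.e., X_s has an ascent direction and is not a local maximiser of f_det. -/

import Mathlib

open Matrix Polynomial

-- analytic lemma
lemma aux_second_deriv (c a : ℝ) (hc : 0 < c) (ha : 1 < a) :
    0 < iteratedDeriv 2 (fun t : ℝ => c * (1 + a * t ^ 2) / (1 + t ^ 2)) 0 := by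
  have hpos : ∀ t : ℝ, (0:ℝ) < 1 + t ^ 2 := fun t => by positivity
  have hne : ∀ t : ℝ, (1 + t ^ 2) ≠ 0 := fun t => (hpos t).ne'
  have hfun : (fun t : ℝ => c * (1 + a * t ^ 2) / (1 + t ^ 2))
      = fun t : ℝ => c * a + (c - c * a) * (1 + t ^ 2)⁻¹ := by
    funext t
    field_simp
    ring
  rw [hfun]
  have hD : ∀ t : ℝ, HasDerivAt (fun s : ℝ => 1 + s ^ 2) (2 * t) t := by
    intro t
    simpa using (hasDerivAt_pow 2 t).const_add 1
  have hderiv : (deriv fun t : ℝ => c * a + (c - c * a) * (1 + t ^ 2)⁻¹)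
      = fun t : ℝ => (c - c * a) * (-(2 * t) / (1 + t ^ 2) ^ 2) := by
    funext t
    have h1 : HasDerivAt (fun s : ℝ => c * a + (c - c * a) * (1 + s ^ 2)⁻¹)
        ((c - c * a) * (-(2 * t) / (1 + t ^ 2) ^ 2)) t := by
      exact (((hD t).inv (hne t)).const_mul (c - c * a)).const_add (c * a)
    exact h1.deriv
  have h2 : HasDerivAt (fun t : ℝ => (c - c * a) * (-(2 * t) / (1 + t ^ 2) ^ 2))
      ((c - c * a) * (-2)) 0 := by
    have hnum : HasDerivAt (fun t : ℝ => -(2 * t)) (-2) (0:ℝ) := by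
      have := ((hasDerivAt_id' (0:ℝ)).const_mul (2:ℝ)).fun_neg
      simpa only [mul_one] using this
    have hden : HasDerivAt (fun t : ℝ => (1 + t ^ 2) ^ 2) 0 (0:ℝ) := by
      have := ((hD 0).fun_pow 2)
      simpa using this
    have hden0 : ((1:ℝ) + (0:ℝ) ^ 2) ^ 2 ≠ 0 := by norm_num
    have := (hnum.div hden hden0)
    have h3 : (-2 * ((1 + (0:ℝ) ^ 2) ^ 2) - -(2 * 0) * 0) / (((1 + (0:ℝ) ^ 2) ^ 2) ^ 2) = -2 := by
      norm_num
    simpa [h3] using this.const_mul (c - c * a)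
  have : iteratedDeriv 2 (fun t : ℝ => c * a + (c - c * a) * (1 + t ^ 2)⁻¹) 0
      = (c - c * a) * (-2) := by
    rw [show (2:ℕ) = 1 + 1 from rfl, iteratedDeriv_succ, iteratedDeriv_one, hderiv]
    exact h2.deriv
  rw [this]
  nlinarith

section MatrixHelpers
variable {m k l : Type*} [Fintype m] [Fintype k] [Fintype l] {R : Type*} [CommRing R]

lemma aux_mul_vecMulVec (A : Matrix m k R) (v : k → R) (w : l → R) :
    A * vecMulVec v w = vecMulVec (A *ᵥ v) w := by
  ext i j
  simp [vecMulVec_apply, mul_apply, mulVec, dotProduct, Finset.sum_mul, mul_assoc]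

lemma aux_transpose_vecMulVec (v : m → R) (w : k → R) :
    (vecMulVec v w)ᵀ = vecMulVec w v := by
  ext i j
  simp [vecMulVec_apply, mul_comm]

lemma aux_vecMulVec_mul_vecMulVec (a : m → R) (b : k → R) (c : k → R) (d : l → R) :
    vecMulVec a b * vecMulVec c d = (b ⬝ᵥ c) • vecMulVec a d := by
  ext i j
  simp only [mul_apply, vecMulVec_apply, Matrix.smul_apply, smul_eq_mul, dotProduct, Finset.sum_mul]
  exact Finset.sum_congr rfl fun x _ => by ring

lemma aux_vecMulVec_smul_left (c : R) (v : m → R) (w : k → R) :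
    vecMulVec (c • v) w = c • vecMulVec v w := by
  ext i j
  simp [vecMulVec_apply, mul_assoc]

lemma aux_vecMulVec_zero_left (w : k → R) :
    vecMulVec (0 : m → R) w = 0 := by
  ext i j; simp [vecMulVec_apply]

end MatrixHelpers

section Charpoly
variable {m : Type*} [Fintype m] [DecidableEq m] {R : Type*} [CommRing R]

lemma aux_charmatrix_eq (M : Matrix m m R) :
    charmatrix M = (X : R[X]) • (1 : Matrix m m R[X]) - M.map C := by
  ext i j
  by_cases h : i = j <;>
    simp [h, charmatrix_apply, Matrix.diagonal_apply, Matrix.one_apply, Matrix.map_apply]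

/-- charpoly of a product decomposition: if `A * N = 0` then
`(A+N).charpoly * X^card = A.charpoly * N.charpoly`. -/
lemma aux_charpoly_add (A N : Matrix m m R) (h : A * N = 0) :
    (A + N).charpoly * X ^ (Fintype.card m) = A.charpoly * N.charpoly := by
  have key : charmatrix A * charmatrix N = (X : R[X]) • charmatrix (A + N) := by
    rw [aux_charmatrix_eq, aux_charmatrix_eq, aux_charmatrix_eq]
    have hmap : (A + N).map C = A.map C + N.map C := by
      ext i j; simp [Matrix.map_apply]
    have h0 : (A.map C) * (N.map C) = 0 := by
      rw [← Matrix.map_mul, h]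
      ext i j; simp [Matrix.map_apply]
    rw [hmap]
    rw [Matrix.sub_mul, Matrix.mul_sub, Matrix.mul_sub]
    rw [Matrix.smul_mul, Matrix.mul_smul, Matrix.mul_smul, Matrix.smul_mul, h0]
    rw [Matrix.one_mul, Matrix.mul_one]
    rw [Matrix.one_mul, smul_sub, smul_add]
    abel
  have := congrArg Matrix.det key
  rw [Matrix.det_mul, Matrix.det_smul, Fintype.card] at this
  rw [Matrix.charpoly, Matrix.charpoly, Matrix.charpoly, mul_comm, Fintype.card]
  exact this.symm

/-- invariance of charpoly under conjugation -/
lemma aux_charpoly_conj (U W M : Matrix m m R) (h : U * W = 1) :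
    (U * M * W).charpoly = M.charpoly := by
  have hWU : W * U = 1 := mul_eq_one_comm.mp h
  have key : charmatrix (U * M * W) = (U.map C) * charmatrix M * (W.map C) := by
    rw [aux_charmatrix_eq, aux_charmatrix_eq]
    rw [Matrix.mul_sub, Matrix.sub_mul, Matrix.mul_smul, Matrix.mul_one, Matrix.smul_mul]
    rw [← Matrix.map_mul, ← Matrix.map_mul, h]
    rw [Matrix.map_mul, Matrix.map_mul]
    congr 1
    · congr 1
      ext i j; simp [Matrix.map_apply, Matrix.one_apply, apply_ite]
  have := congrArg Matrix.det key
  rw [Matrix.det_mul, Matrix.det_mul] at this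
  rw [Matrix.charpoly, this, Matrix.charpoly]
  rw [mul_comm ((U.map C).det), mul_assoc, ← Matrix.det_mul, ← Matrix.map_mul, h]
  simp

lemma aux_charpoly_diagonal (d : m → R) [LinearOrder m] :
    (Matrix.diagonal d).charpoly = ∏ i : m, ((X : R[X]) - C (d i)) := by
  rw [Matrix.charpoly_of_upperTriangular _ (Matrix.blockTriangular_diagonal d)]
  simp

end Charpoly

lemma aux_charmatrix_map_ringHom {m : Type*} [Fintype m] [DecidableEq m]
    {R S : Type*} [CommRing R] [CommRing S] (M : Matrix m m R) (f : R[X] →+* S) :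
    (charmatrix M).map f = (f X) • (1 : Matrix m m S) - M.map (f.comp C) := by
  ext i j
  by_cases h : i = j <;>
    simp [h, charmatrix_apply, Matrix.diagonal_apply, Matrix.one_apply, Matrix.map_apply]

lemma aux_charpoly_rect {n p : ℕ} (hpn : p ≤ n) (Xs : Matrix (Fin n) (Fin p) ℝ)
    (hXs : Xsᵀ * Xs = 1) (B : Matrix (Fin p) (Fin p) ℝ) :
    (Xs * B * Xsᵀ).charpoly = X ^ (n - p) * B.charpoly := by
  set K := FractionRing ℝ[X]
  set φ : ℝ[X] →+* K := algebraMap ℝ[X] K with hφ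
  have hinj : Function.Injective φ := IsFractionRing.injective ℝ[X] K
  apply hinj
  set ψ : ℝ →+* K := φ.comp C with hψ
  set x : K := φ X with hxdef
  have hx : x ≠ 0 := by
    simp only [hxdef]
    intro h
    exact X_ne_zero (hinj (by simpa using h))
  set c : K := x⁻¹ with hcdef
  have hxc : x * c = 1 := mul_inv_cancel₀ hx
  set M : Matrix (Fin n) (Fin p) K := Xs.map ψ with hM
  set B' : Matrix (Fin p) (Fin p) K := B.map ψ with hB'
  have hmapA : (Xs * B * Xsᵀ).map ψ = M * B' * Mᵀ := by
    rw [Matrix.map_mul, Matrix.map_mul, hM, hB', ← Matrix.transpose_map]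
  have hMtM : Mᵀ * M = 1 := by
    rw [hM, ← Matrix.transpose_map, ← Matrix.map_mul, hXs]
    exact Matrix.map_one _ ψ.map_zero ψ.map_one
  -- LHS
  have lhs : φ ((Xs * B * Xsᵀ).charpoly)
      = (x • (1 : Matrix (Fin n) (Fin n) K) - M * B' * Mᵀ).det := by
    rw [Matrix.charpoly, RingHom.map_det, RingHom.mapMatrix_apply, aux_charmatrix_map_ringHom, hmapA]
  have rhsB : φ (B.charpoly) = (x • (1 : Matrix (Fin p) (Fin p) K) - B').det := by
    rw [Matrix.charpoly, RingHom.map_det, RingHom.mapMatrix_apply, aux_charmatrix_map_ringHom]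
  -- compute LHS
  have e1 : x • (1 : Matrix (Fin n) (Fin n) K) - M * B' * Mᵀ
      = x • ((1 : Matrix (Fin n) (Fin n) K) - c • (M * B' * Mᵀ)) := by
    rw [smul_sub, smul_smul, hxc, one_smul]
  have e2 : ((1 : Matrix (Fin n) (Fin n) K) - c • (M * B' * Mᵀ)).det
      = ((1 : Matrix (Fin p) (Fin p) K) - c • B').det := by
    have h1 : c • (M * B' * Mᵀ) = M * ((c • B') * Mᵀ) := by
      rw [Matrix.mul_assoc, ← Matrix.mul_smul, ← Matrix.smul_mul]
    rw [h1, Matrix.det_one_sub_mul_comm, Matrix.mul_assoc, hMtM, Matrix.mul_one]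
  have e3 : ((1 : Matrix (Fin p) (Fin p) K) - c • B').det
      = c ^ p * (x • (1 : Matrix (Fin p) (Fin p) K) - B').det := by
    have h1 : (1 : Matrix (Fin p) (Fin p) K) - c • B'
        = c • (x • (1 : Matrix (Fin p) (Fin p) K) - B') := by
      rw [smul_sub, smul_smul, mul_comm c x, hxc, one_smul]
    rw [h1, Matrix.det_smul]
    simp
  have hpow : x ^ n * c ^ p = x ^ (n - p) := by
    rw [← Nat.sub_add_cancel hpn, pow_add]
    rw [Nat.sub_add_cancel hpn]
    rw [mul_assoc, ← mul_pow, hxc, one_pow, mul_one]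
  rw [lhs, e1, Matrix.det_smul, e2, e3, Fintype.card_fin]
  rw [_root_.map_mul, map_pow, rhsB, ← hxdef, ← mul_assoc, hpow]

lemma aux_charpoly_isHermitian {m : Type*} [Fintype m] [DecidableEq m] [LinearOrder m]
    {A : Matrix m m ℝ} (hA : A.IsHermitian) :
    A.charpoly = ∏ i : m, ((X : ℝ[X]) - C (hA.eigenvalues i)) := by
  have hdiag : Matrix.diagonal (RCLike.ofReal ∘ hA.eigenvalues) = Matrix.diagonal hA.eigenvalues := by
    congr 1
  have hU : (hA.eigenvectorUnitary : Matrix m m ℝ) * star (hA.eigenvectorUnitary : Matrix m m ℝ) = 1 :=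
    (Matrix.mem_unitaryGroup_iff).mp (hA.eigenvectorUnitary).2
  calc A.charpoly
      = ((hA.eigenvectorUnitary : Matrix m m ℝ) * Matrix.diagonal hA.eigenvalues
          * star (hA.eigenvectorUnitary : Matrix m m ℝ)).charpoly := by
        rw [← hdiag]
        exact congrArg Matrix.charpoly hA.spectral_theorem
    _ = (Matrix.diagonal hA.eigenvalues).charpoly := aux_charpoly_conj _ _ _ hU
    _ = ∏ i : m, ((X : ℝ[X]) - C (hA.eigenvalues i)) := aux_charpoly_diagonal _

lemma aux_multiset_ge {ι : Type*} [Fintype ι] [DecidableEq ι] (g : ι → ℝ) (μ : ℝ)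
    (hg : ∀ i, μ ≤ g i) :
    Finset.univ.val.map g = ((Finset.univ.filter fun i => μ < g i).val.map g)
      + Multiset.replicate (Fintype.card ι - (Finset.univ.filter fun i => μ < g i).card) μ := by
  have hsplit : (Finset.univ : Finset ι).val
      = (Finset.univ.filter fun i => μ < g i).val
        + (Finset.univ.filter fun i => ¬ μ < g i).val := by
    rw [Finset.filter_val, Finset.filter_val]
    exact (Multiset.filter_add_not _ _).symm
  have hrep : (Finset.univ.filter fun i => ¬ μ < g i).val.map g
      = Multiset.replicate (Fintype.card ι - (Finset.univ.filter fun i => μ < g i).card) μ := by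
    have hcard : ((Finset.univ.filter fun i => ¬ μ < g i).val.map g).card
        = Fintype.card ι - (Finset.univ.filter fun i => μ < g i).card := by
      rw [Multiset.card_map]
      have := Finset.card_filter_add_card_filter_not
        (s := (Finset.univ : Finset ι)) (p := fun i => μ < g i)
      simp only [Finset.card_univ] at this
      have h2 : Multiset.card (Finset.univ.filter fun i => ¬ μ < g i).val
          = (Finset.univ.filter fun i => ¬ μ < g i).card := rfl
      rw [h2]
      omega
    rw [← hcard]
    rw [Multiset.eq_replicate_card]
    intro b hb
    obtain ⟨i, hi, rfl⟩ := Multiset.mem_map.mp hb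
    have hi2 : i ∈ Finset.univ.filter (fun i => ¬ μ < g i) := Finset.mem_val.mp hi
    have hi' : ¬ μ < g i := (Finset.mem_filter.mp hi2).2
    exact le_antisymm (not_lt.mp hi') (hg i)
  conv_lhs => rw [hsplit]
  rw [Multiset.map_add, hrep]

lemma aux_multiset_main {n p : ℕ} (hpn : p ≤ n) (f : Fin n → ℝ)
    (hf : ∀ i j : Fin n, i ≤ j → f j ≤ f i)
    (β : Fin p → ℝ) (ν : Fin n → ℝ) (μ : ℝ) (hμ : 0 < μ)
    (hβ : ∀ j, μ ≤ β j) (hν : ∀ i, ν i ≤ μ)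
    (heq : Finset.univ.val.map f + Multiset.replicate p 0
         = Finset.univ.val.map β + Finset.univ.val.map ν) :
    Finset.univ.val.map β = Finset.univ.val.map (fun i : Fin p => f (Fin.castLE hpn i)) := by
  classical
  -- filtering with (μ < ·)
  have h0 : Multiset.filter (fun a => μ < a) (Multiset.replicate p (0:ℝ)) = 0 := by
    rw [Multiset.filter_eq_nil]
    intro a ha
    rw [Multiset.eq_of_mem_replicate ha]
    exact not_lt.mpr hμ.le
  have hνf : Multiset.filter (fun a => μ < a) (Finset.univ.val.map ν) = 0 := by
    rw [Multiset.filter_eq_nil]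
    intro a ha
    obtain ⟨i, _, rfl⟩ := Multiset.mem_map.mp ha
    exact not_lt.mpr (hν i)
  have hF : Multiset.filter (fun a => μ < a) (Finset.univ.val.map f)
      = Multiset.filter (fun a => μ < a) (Finset.univ.val.map β) := by
    have := congrArg (Multiset.filter (fun a => μ < a)) heq
    rwa [Multiset.filter_add, Multiset.filter_add, h0, hνf, add_zero, add_zero] at this
  have hcomm : ∀ (k : ℕ) (g : Fin k → ℝ),
      Multiset.filter (fun a => μ < a) (Finset.univ.val.map g)
        = (Finset.univ.filter fun i => μ < g i).val.map g := by
    intro k g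
    rw [Multiset.filter_map, Finset.filter_val]
    rfl
  -- cardinality bounds
  have hcard_le : (Finset.univ.filter fun i : Fin n => μ < f i).card ≤ p := by
    have h1 : ((Finset.univ.filter fun i : Fin n => μ < f i).val.map f).card
        ≤ (Finset.univ.val.map β).card := by
      rw [← hcomm, hF]
      exact Multiset.card_le_card (Multiset.filter_le _ _)
    have h2 : (Finset.univ.val.map β).card = p := by simp
    rw [h2, Multiset.card_map] at h1
    exact h1
  have hlt_lt_p : ∀ j : Fin n, μ < f j → (j : ℕ) < p := by
    intro j hj
    by_contra hc
    push_neg at hc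
    have hsub : Finset.Iic j ⊆ Finset.univ.filter fun i : Fin n => μ < f i := by
      intro k hk
      refine Finset.mem_filter.mpr ⟨Finset.mem_univ _, lt_of_lt_of_le hj ?_⟩
      exact hf k j (Finset.mem_Iic.mp hk)
    have := Finset.card_le_card hsub
    rw [Fin.card_Iic] at this
    omega
  have hge_count : p ≤ (Finset.univ.filter fun i : Fin n => μ ≤ f i).card := by
    have h0' : Multiset.filter (fun a => μ ≤ a) (Multiset.replicate p (0:ℝ)) = 0 := by
      rw [Multiset.filter_eq_nil]
      intro a ha
      rw [Multiset.eq_of_mem_replicate ha]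
      exact not_le.mpr hμ
    have hβf : Multiset.filter (fun a => μ ≤ a) (Finset.univ.val.map β)
        = Finset.univ.val.map β := by
      rw [Multiset.filter_eq_self]
      intro a ha
      obtain ⟨i, _, rfl⟩ := Multiset.mem_map.mp ha
      exact hβ i
    have := congrArg (Multiset.filter (fun a => μ ≤ a)) heq
    rw [Multiset.filter_add, Multiset.filter_add, h0', hβf, add_zero] at this
    have hc := congrArg Multiset.card this
    rw [Multiset.card_add] at hc
    have h2 : Multiset.card (Multiset.filter (fun a => μ ≤ a) (Finset.univ.val.map f))
        = (Finset.univ.filter fun i : Fin n => μ ≤ f i).card := by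
      rw [Multiset.filter_map, Multiset.card_map]
      rfl
    rw [h2] at hc
    have : (Finset.univ.val.map β).card = p := by simp
    omega
  have hle_f : ∀ i : Fin p, μ ≤ f (Fin.castLE hpn i) := by
    intro i
    by_contra hc
    push_neg at hc
    have hsub : (Finset.univ.filter fun j : Fin n => μ ≤ f j)
        ⊆ Finset.Iio (Fin.castLE hpn i) := by
      intro k hk
      rw [Finset.mem_Iio]
      by_contra hk2
      push_neg at hk2
      have := hf _ _ hk2
      have hk3 := (Finset.mem_filter.mp hk).2
      linarith
    have := Finset.card_le_card hsub
    rw [Fin.card_Iio] at this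
    have hi : (i : ℕ) < p := i.isLt
    simp only [Fin.coe_castLE] at this
    omega
  -- the filter sets correspond under castLE
  have hsets : (Finset.univ.filter fun j : Fin n => μ < f j)
      = Finset.map (Fin.castLEEmb hpn) (Finset.univ.filter fun i : Fin p => μ < f (Fin.castLE hpn i)) := by
    ext j
    simp only [Finset.mem_filter, Finset.mem_univ, true_and, Finset.mem_map, Fin.castLEEmb_apply]
    constructor
    · intro hj
      refine ⟨⟨(j : ℕ), hlt_lt_p j hj⟩, ?_, ?_⟩
      · simpa using hj
      · ext; simp
    · rintro ⟨i, hi, rfl⟩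
      simpa using hi
  -- decompose both multisets
  have hdecβ := aux_multiset_ge β μ hβ
  have hdecf := aux_multiset_ge (fun i : Fin p => f (Fin.castLE hpn i)) μ hle_f
  rw [Fintype.card_fin] at hdecβ hdecf
  have hkey : (Finset.univ.filter fun i : Fin p => μ < β i).val.map β
      = (Finset.univ.filter fun i : Fin p => μ < f (Fin.castLE hpn i)).val.map
          (fun i : Fin p => f (Fin.castLE hpn i)) := by
    rw [← hcomm, ← hF, hcomm, hsets, Finset.map_val, Multiset.map_map]
    rfl
  have hcards : (Finset.univ.filter fun i : Fin p => μ < β i).card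
      = (Finset.univ.filter fun i : Fin p => μ < f (Fin.castLE hpn i)).card := by
    have := congrArg Multiset.card hkey
    simpa [Finset.card] using this
  rw [hdecβ, hdecf, hkey, hcards]

section MAIN

/-- If `X_s` is a stationary point of `f_det` (i.e. `range(Γ X_s) = range(X_s)`)
with `X_sᵀ Γ X_s` invertible, and the multiset of eigenvalues of `X_sᵀ Γ X_s` is
not `{σ₁²,…,σ_p²}`, then there is a direction `Δ` with positive second directional
derivative: an ascent direction, so `X_s` is not a local maximiser. -/
theorem stmt_12 {n p : ℕ} (hpn : p ≤ n) (σ : Fin n → ℝ)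
    (hmono : ∀ i j : Fin n, i ≤ j → σ j ≤ σ i) (hσ0 : ∀ i, 0 ≤ σ i)
    (Γ : Matrix (Fin n) (Fin n) ℝ) (hΓ : Γ = Matrix.diagonal fun i => σ i ^ 2)
    (Xs : Matrix (Fin n) (Fin p) ℝ) (hXs : Xsᵀ * Xs = 1)
    (hstat : LinearMap.range (Γ * Xs).mulVecLin = LinearMap.range Xs.mulVecLin)
    (hinv : IsUnit (Xsᵀ * Γ * Xs).det)
    (hB : (Xsᵀ * Γ * Xs).IsHermitian)
    (hne : Finset.univ.val.map hB.eigenvalues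
        ≠ Finset.univ.val.map fun i : Fin p => σ (Fin.castLE hpn i) ^ 2) :
    ∃ Δ : Matrix (Fin n) (Fin p) ℝ,
      0 < iteratedDeriv 2 (fun t : ℝ =>
        ((Xs + t • Δ)ᵀ * Γ * (Xs + t • Δ)).det
          / ((Xs + t • Δ)ᵀ * (Xs + t • Δ)).det) 0 := by
  classical
  rcases Nat.eq_zero_or_pos p with hp0 | hp0
  · exfalso
    apply hne
    subst hp0
    simp
  set B : Matrix (Fin p) (Fin p) ℝ := Xsᵀ * Γ * Xs with hBdef
  have hΓsymm : Γᵀ = Γ := by rw [hΓ]; exact Matrix.diagonal_transpose _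
  have hΓpsd : ∀ z : Fin n → ℝ, 0 ≤ z ⬝ᵥ (Γ *ᵥ z) := by
    intro z
    rw [hΓ]
    have h1 : z ⬝ᵥ ((Matrix.diagonal fun i => σ i ^ 2) *ᵥ z) = ∑ i, σ i ^ 2 * z i ^ 2 := by
      simp only [dotProduct, Matrix.mulVec_diagonal]
      exact Finset.sum_congr rfl fun i _ => by ring
    rw [h1]
    positivity
  -- Γ * Xs = Xs * B
  have hcol : ∀ j : Fin p, ∃ z : Fin p → ℝ, Xs *ᵥ z = (Γ * Xs) *ᵥ Pi.single j 1 := by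
    intro j
    have hmem : (Γ * Xs) *ᵥ Pi.single j 1 ∈ LinearMap.range Xs.mulVecLin := by
      rw [← hstat]
      exact ⟨Pi.single j 1, rfl⟩
    obtain ⟨z, hz⟩ := hmem
    exact ⟨z, by simpa [Matrix.mulVecLin_apply] using hz⟩
  choose Z hZ using hcol
  have hGXs : Γ * Xs = Xs * B := by
    have hXC : Xs * (Matrix.of fun i j => Z j i) = Γ * Xs := by
      ext i j
      have h1 := congrFun (hZ j) i
      simp only [Matrix.mulVec, dotProduct, Pi.single_apply, mul_ite, mul_one, mul_zero,
        Finset.sum_ite_eq', Finset.mem_univ, if_true] at h1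
      rw [Matrix.mul_apply]
      simpa [Matrix.of_apply] using h1
    have hC : (Matrix.of fun i j => Z j i) = B := by
      have h2 : Xsᵀ * (Xs * (Matrix.of fun i j => Z j i)) = Xsᵀ * (Γ * Xs) := by rw [hXC]
      rw [← Matrix.mul_assoc, hXs, Matrix.one_mul, ← Matrix.mul_assoc] at h2
      exact h2
    rw [← hC, hXC]
  set A : Matrix (Fin n) (Fin n) ℝ := Xs * B * Xsᵀ with hA
  set N : Matrix (Fin n) (Fin n) ℝ := Γ - A with hNdef
  have hBsymm : Bᵀ = B := by
    rw [← Matrix.conjTranspose_eq_transpose_of_trivial]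
    exact hB
  have hXstΓ : Xsᵀ * Γ = B * Xsᵀ := by
    have h1 := congrArg Matrix.transpose hGXs
    rwa [Matrix.transpose_mul, Matrix.transpose_mul, hΓsymm, hBsymm] at h1
  have hXstN : Xsᵀ * N = 0 := by
    rw [hNdef, Matrix.mul_sub, hXstΓ, hA]
    have h1 : Xsᵀ * (Xs * B * Xsᵀ) = B * Xsᵀ := by
      rw [Matrix.mul_assoc Xs B Xsᵀ, ← Matrix.mul_assoc, hXs, Matrix.one_mul]
    rw [h1, sub_self]
  have hAN : A * N = 0 := by
    rw [hA, Matrix.mul_assoc (Xs * B) Xsᵀ N, hXstN, Matrix.mul_zero]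
  have hAplusN : A + N = Γ := by rw [hNdef]; exact add_sub_cancel A Γ
  have hNherm : N.IsHermitian := by
    have hΓh : Γ.IsHermitian := by rw [hΓ]; exact Matrix.isHermitian_diagonal _
    have hAh : A.IsHermitian := by
      have hXsH : Xsᴴ = Xsᵀ := Matrix.conjTranspose_eq_transpose_of_trivial _
      rw [hA, ← hXsH]
      exact Matrix.isHermitian_mul_mul_conjTranspose Xs hB
    exact hΓh.sub hAh
  -- eigendata of B
  obtain ⟨j₀, -, hj₀min⟩ :=
    Finset.exists_min_image Finset.univ hB.eigenvalues ⟨⟨0, hp0⟩, Finset.mem_univ _⟩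
  set mu := hB.eigenvalues j₀ with hmudef
  set w : Fin p → ℝ := ⇑(hB.eigenvectorBasis j₀) with hwdef
  have hBw : B *ᵥ w = mu • w := hB.mulVec_eigenvectorBasis j₀
  have hww : w ⬝ᵥ w = 1 := by
    have hnorm : ‖hB.eigenvectorBasis j₀‖ = 1 := hB.eigenvectorBasis.orthonormal.1 j₀
    rw [EuclideanSpace.norm_eq] at hnorm
    have h1 : ∑ i, ‖hB.eigenvectorBasis j₀ i‖ ^ 2 = 1 := by
      exact Real.sqrt_eq_one.mp hnorm
    simpa [dotProduct, Real.norm_eq_abs, sq_abs, pow_two] using h1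
  have hmu_eq : w ⬝ᵥ (B *ᵥ w) = mu := by
    rw [hBw, dotProduct_smul, hww]
    simp
  have hmu_nonneg : 0 ≤ mu := by
    rw [← hmu_eq]
    have h1 : B *ᵥ w = Xsᵀ *ᵥ (Γ *ᵥ (Xs *ᵥ w)) := by
      rw [hBdef, ← Matrix.mulVec_mulVec, ← Matrix.mulVec_mulVec]
    rw [h1, Matrix.dotProduct_mulVec, Matrix.vecMul_transpose]
    exact hΓpsd _
  have hmu_pos : 0 < mu := by
    rcases hmu_nonneg.lt_or_eq with h | h
    · exact h
    · exfalso
      have hBw0 : B *ᵥ w = 0 := by rw [hBw, ← h, zero_smul]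
      have h3 : B⁻¹ *ᵥ (B *ᵥ w) = w := by
        rw [Matrix.mulVec_mulVec, Matrix.nonsing_inv_mul B hinv, Matrix.one_mulVec]
      rw [hBw0, Matrix.mulVec_zero] at h3
      rw [← h3] at hww
      simp [dotProduct] at hww
  have hβ : ∀ j, mu ≤ hB.eigenvalues j := fun j => hj₀min j (Finset.mem_univ _)
  by_cases hex : ∃ i : Fin n, mu < hNherm.eigenvalues i
  · -- ascent direction exists
    obtain ⟨i₁, hlam⟩ := hex
    set lam := hNherm.eigenvalues i₁ with hlamdef
    set v : Fin n → ℝ := ⇑(hNherm.eigenvectorBasis i₁) with hvdef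
    have hNv : N *ᵥ v = lam • v := hNherm.mulVec_eigenvectorBasis i₁
    have hvv : v ⬝ᵥ v = 1 := by
      have hnorm : ‖hNherm.eigenvectorBasis i₁‖ = 1 := hNherm.eigenvectorBasis.orthonormal.1 i₁
      rw [EuclideanSpace.norm_eq] at hnorm
      have h1 : ∑ i, ‖hNherm.eigenvectorBasis i₁ i‖ ^ 2 = 1 := Real.sqrt_eq_one.mp hnorm
      simpa [dotProduct, Real.norm_eq_abs, sq_abs, pow_two] using h1
    have hlampos : 0 < lam := lt_trans hmu_pos hlam
    have hXsv : Xsᵀ *ᵥ v = 0 := by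
      have h1 : Xsᵀ *ᵥ (N *ᵥ v) = 0 := by
        rw [Matrix.mulVec_mulVec, hXstN, Matrix.zero_mulVec]
      rw [hNv, Matrix.mulVec_smul] at h1
      exact (smul_eq_zero.mp h1).resolve_left hlampos.ne'
    have hΓv : Γ *ᵥ v = lam • v := by
      rw [← hAplusN, Matrix.add_mulVec]
      have h1 : A *ᵥ v = 0 := by
        rw [hA, ← Matrix.mulVec_mulVec, hXsv, Matrix.mulVec_zero]
      rw [h1, hNv, zero_add]
    set Δ : Matrix (Fin n) (Fin p) ℝ := vecMulVec v w with hΔdef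
    set W : Matrix (Fin p) (Fin p) ℝ := vecMulVec w w with hWdef
    have hΓΔ : Γ * Δ = lam • Δ := by
      rw [hΔdef, aux_mul_vecMulVec, hΓv, aux_vecMulVec_smul_left]
    have hXstΔ : Xsᵀ * Δ = 0 := by
      rw [hΔdef, aux_mul_vecMulVec, hXsv, aux_vecMulVec_zero_left]
    have hΔtXs : Δᵀ * Xs = 0 := by
      have h1 := congrArg Matrix.transpose hXstΔ
      rwa [Matrix.transpose_mul, Matrix.transpose_transpose, Matrix.transpose_zero] at h1
    have hΔtΓ : Δᵀ * Γ = lam • Δᵀ := by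
      have h1 := congrArg Matrix.transpose hΓΔ
      rwa [Matrix.transpose_mul, Matrix.transpose_smul, hΓsymm] at h1
    have hΔtΔ : Δᵀ * Δ = W := by
      rw [hΔdef, aux_transpose_vecMulVec, aux_vecMulVec_mul_vecMulVec, hvv, one_smul, hWdef]
    have hBW : B * W = mu • W := by
      rw [hWdef, aux_mul_vecMulVec, hBw, aux_vecMulVec_smul_left]
    have e1 : Xsᵀ * Γ * Δ = 0 := by
      rw [Matrix.mul_assoc, hΓΔ, Matrix.mul_smul, hXstΔ, smul_zero]
    have e2 : Δᵀ * Γ * Xs = 0 := by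
      rw [hΔtΓ, Matrix.smul_mul, hΔtXs, smul_zero]
    have e3 : Δᵀ * Γ * Δ = lam • W := by
      rw [hΔtΓ, Matrix.smul_mul, hΔtΔ]
    have hnum : ∀ t : ℝ, (Xs + t • Δ)ᵀ * Γ * (Xs + t • Δ) = B + (t ^ 2 * lam) • W := by
      intro t
      rw [Matrix.transpose_add, Matrix.transpose_smul]
      simp only [Matrix.add_mul, Matrix.mul_add, Matrix.smul_mul, Matrix.mul_smul, smul_smul]
      rw [e1, e2, e3]
      simp only [smul_zero, add_zero, zero_add, smul_smul]
      rw [show t * (t * lam) = t ^ 2 * lam by ring, ← hBdef]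
    have hden : ∀ t : ℝ, (Xs + t • Δ)ᵀ * (Xs + t • Δ) = 1 + (t ^ 2) • W := by
      intro t
      rw [Matrix.transpose_add, Matrix.transpose_smul]
      simp only [Matrix.add_mul, Matrix.mul_add, Matrix.smul_mul, Matrix.mul_smul, smul_smul]
      rw [hXs, hXstΔ, hΔtXs, hΔtΔ]
      simp only [smul_zero, add_zero, zero_add]
      rw [smul_smul, show t * t = t ^ 2 by ring]
    have hdetden : ∀ t : ℝ, ((1 : Matrix (Fin p) (Fin p) ℝ) + (t ^ 2) • W).det = 1 + t ^ 2 := by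
      intro t
      have h1 : (t ^ 2) • W = vecMulVec ((t ^ 2) • w) w := by
        rw [hWdef, aux_vecMulVec_smul_left]
      rw [h1, Matrix.vecMulVec_eq Unit, Matrix.det_one_add_replicateCol_mul_replicateRow, dotProduct_smul, hww]
      simp
    have hdetnum : ∀ t : ℝ, (B + (t ^ 2 * lam) • W).det = B.det * (1 + (lam / mu) * t ^ 2) := by
      intro t
      have h1 : B + (t ^ 2 * lam) • W = B * (1 + ((t ^ 2 * lam) / mu) • W) := by
        rw [Matrix.mul_add, Matrix.mul_one, Matrix.mul_smul, hBW, smul_smul,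
          div_mul_cancel₀ _ hmu_pos.ne']
      rw [h1, Matrix.det_mul]
      have h2 : ((t ^ 2 * lam) / mu) • W = vecMulVec (((t ^ 2 * lam) / mu) • w) w := by
        rw [hWdef, aux_vecMulVec_smul_left]
      rw [h2, Matrix.vecMulVec_eq Unit, Matrix.det_one_add_replicateCol_mul_replicateRow, dotProduct_smul, hww]
      simp only [smul_eq_mul, mul_one]
      ring
    have hdetB : 0 < B.det := by
      have h1 : B.det = ∏ j, hB.eigenvalues j := by
        have h2 := hB.det_eq_prod_eigenvalues
        simpa using h2
      rw [h1]
      exact Finset.prod_pos fun j _ => lt_of_lt_of_le hmu_pos (hβ j)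
    refine ⟨Δ, ?_⟩
    have hfun : (fun t : ℝ => ((Xs + t • Δ)ᵀ * Γ * (Xs + t • Δ)).det
          / ((Xs + t • Δ)ᵀ * (Xs + t • Δ)).det)
        = fun t : ℝ => B.det * (1 + (lam / mu) * t ^ 2) / (1 + t ^ 2) := by
      funext t
      rw [hnum t, hden t, hdetnum t, hdetden t]
    rw [hfun]
    exact aux_second_deriv B.det (lam / mu) hdetB ((one_lt_div hmu_pos).mpr hlam)
  · exfalso
    push_neg at hex
    have hchΓ : Γ.charpoly = ∏ i, ((X : ℝ[X]) - C (σ i ^ 2)) := by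
      rw [hΓ]; exact aux_charpoly_diagonal _
    have hchB : B.charpoly = ∏ j, ((X : ℝ[X]) - C (hB.eigenvalues j)) :=
      aux_charpoly_isHermitian hB
    have hchN : N.charpoly = ∏ i, ((X : ℝ[X]) - C (hNherm.eigenvalues i)) :=
      aux_charpoly_isHermitian hNherm
    have hchA : A.charpoly = X ^ (n - p) * B.charpoly := aux_charpoly_rect hpn Xs hXs B
    have hkey0 := aux_charpoly_add A N hAN
    rw [hAplusN, Fintype.card_fin, hchA] at hkey0
    have hXnp : (X : ℝ[X]) ^ n = X ^ (n - p) * X ^ p := by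
      rw [← pow_add]
      congr 1
      omega
    rw [hXnp] at hkey0
    have heqpoly : Γ.charpoly * X ^ p = B.charpoly * N.charpoly := by
      have h1 : (X : ℝ[X]) ^ (n - p) * (Γ.charpoly * X ^ p)
          = (X : ℝ[X]) ^ (n - p) * (B.charpoly * N.charpoly) := by
        linear_combination hkey0
      exact mul_left_cancel₀ (pow_ne_zero _ Polynomial.X_ne_zero) h1
    set f : Fin n → ℝ := fun i => σ i ^ 2 with hfdef
    have hL : Γ.charpoly * X ^ p
        = (((Finset.univ.val.map f) + Multiset.replicate p (0 : ℝ)).map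
            (fun a => (X : ℝ[X]) - C a)).prod := by
      rw [Multiset.map_add, Multiset.prod_add, Multiset.map_map, Multiset.map_replicate,
        Multiset.prod_replicate, hchΓ]
      rw [Finset.prod_eq_multiset_prod]
      simp [Function.comp, hfdef]
    have hR : B.charpoly * N.charpoly
        = (((Finset.univ.val.map hB.eigenvalues) + (Finset.univ.val.map hNherm.eigenvalues)).map
            (fun a => (X : ℝ[X]) - C a)).prod := by
      rw [Multiset.map_add, Multiset.prod_add, Multiset.map_map, Multiset.map_map, hchB, hchN]
      rw [Finset.prod_eq_multiset_prod, Finset.prod_eq_multiset_prod]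
      simp [Function.comp]
    have hprod : (((Finset.univ.val.map f) + Multiset.replicate p (0 : ℝ)).map
            (fun a => (X : ℝ[X]) - C a)).prod
        = (((Finset.univ.val.map hB.eigenvalues) + (Finset.univ.val.map hNherm.eigenvalues)).map
            (fun a => (X : ℝ[X]) - C a)).prod := by
      rw [← hL, ← hR]
      exact heqpoly
    have hmeq := congrArg Polynomial.roots hprod
    rw [Polynomial.roots_multiset_prod_X_sub_C, Polynomial.roots_multiset_prod_X_sub_C] at hmeq
    exact hne (aux_multiset_main hpn f
      (fun i j hij => pow_le_pow_left₀ (hσ0 j) (hmono i j hij) 2)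
      hB.eigenvalues hNherm.eigenvalues mu hmu_pos hβ hex hmeq)

end MAIN
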